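/- arXiv:1807.08065 — 2 statements merged into one kernel-verified Lean document; each statement's English description precedes it below -/
import Mathlib

section
/- Suppose at least one of T_L, T_R contains a pair. Then every feasible 2-TSP solution has min-sum cost at least c(T); in particular OPT^tsp_sum ≥ c(T). -/
open scoped Classical

noncomputable def cost {α : Type*} [Fintype α] (w : α → α → ℝ) (G : SimpleGraph α) : ℝ :=
  (∑ u : α, ∑ v : α, if G.Adj u v then w u v else 0) / 2

/-- `G` is a minimum spanning tree for the weight function `w`. -/
def IsMST {α : Type*} [Fintype α] (w : α → α → ℝ) (G : SimpleGraph α) : Prop :=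
  G.IsTree ∧ ∀ G' : SimpleGraph α, G'.IsTree → cost w G ≤ cost w G'

/-- Cost of a graph on the subtype of a subset `S`, w.r.t. the restricted weights. -/
noncomputable def subCost {V : Type*} [Fintype V] (w : V → V → ℝ) (S : Set V)
    (G : SimpleGraph S) : ℝ :=
  cost (fun u v : S => w u.1 v.1) G

/-- `G` is a minimum spanning tree of the subset `S` w.r.t. the restricted weights. -/
def IsSubMST {V : Type*} [Fintype V] (w : V → V → ℝ) (S : Set V) (G : SimpleGraph S) : Prop :=
  IsMST (fun u v : S => w u.1 v.1) G

/-- A permutation is a Hamiltonian cycle (cyclic ordering of all elements) iff it is a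
single cycle moving every element. -/
def IsHamCycle {α : Type*} (σ : Equiv.Perm α) : Prop :=
  σ.IsCycle ∧ ∀ x, σ x ≠ x

/-- Cost of the tour determined by a cyclic ordering: sum of the weights of consecutive
pairs. -/
noncomputable def tourCost {α : Type*} [Fintype α] (w : α → α → ℝ) (σ : Equiv.Perm α) : ℝ :=
  ∑ x : α, w x (σ x)

/-- Tour cost on the subtype of a subset `S`, w.r.t. the restricted weights. -/
noncomputable def subTourCost {V : Type*} [Fintype V] (w : V → V → ℝ) (S : Set V)
    (σ : Equiv.Perm S) : ℝ :=
  tourCost (fun u v : S => w u.1 v.1) σ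

/-- Optimal min-sum cost of a feasible 2-TSP solution. -/
noncomputable def OPTtspSum {V : Type*} [Fintype V] {n : ℕ} (w : V → V → ℝ)
    (p q : Fin n → V) : ℝ :=
  sInf {c : ℝ | ∃ B : Set V, (∀ i, (p i ∈ B ↔ q i ∉ B)) ∧
    ∃ (σb : Equiv.Perm B) (σr : Equiv.Perm (Bᶜ : Set V)),
      IsHamCycle σb ∧ IsHamCycle σr ∧ c = subTourCost w B σb + subTourCost w Bᶜ σr}

/-- Optimal min-max cost of a feasible 2-TSP solution. -/
noncomputable def OPTtspMm {V : Type*} [Fintype V] {n : ℕ} (w : V → V → ℝ)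
    (p q : Fin n → V) : ℝ :=
  sInf {c : ℝ | ∃ B : Set V, (∀ i, (p i ∈ B ↔ q i ∉ B)) ∧
    ∃ (σb : Equiv.Perm B) (σr : Equiv.Perm (Bᶜ : Set V)),
      IsHamCycle σb ∧ IsHamCycle σr ∧ c = max (subTourCost w B σb) (subTourCost w Bᶜ σr)}

section MyAux
open SimpleGraph Finset Equiv
variable {V : Type*} [Fintype V]

open SimpleGraph Finset Equiv


lemma myCost_mono (w : V → V → ℝ) (hnn : ∀ u v, 0 ≤ w u v) {G H : SimpleGraph V} (h : G ≤ H) :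
    cost w G ≤ cost w H := by
  unfold cost
  have hs : (∑ u : V, ∑ v : V, if G.Adj u v then w u v else 0)
      ≤ ∑ u : V, ∑ v : V, if H.Adj u v then w u v else 0 := by
    refine Finset.sum_le_sum fun u _ => Finset.sum_le_sum fun v _ => ?_
    by_cases hg : G.Adj u v
    · rw [if_pos hg, if_pos (h hg)]
    · rw [if_neg hg]
      split
      · exact hnn u v
      · exact le_rfl
  linarith

lemma cost_fromEdgeSet (w : V → V → ℝ) (hsymm : ∀ u v, w u v = w v u)
    (E : Finset (Sym2 V)) (hE : ∀ e ∈ E, ¬ e.IsDiag) :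
    cost w (SimpleGraph.fromEdgeSet ↑E) = ∑ e ∈ E, Sym2.lift ⟨w, hsymm⟩ e := by
  classical
  induction E using Finset.induction_on with
  | empty => simp [cost]
  | @insert e E he ih =>
    have hEd : ∀ e ∈ E, ¬ e.IsDiag := fun e' he' => hE e' (Finset.mem_insert_of_mem he')
    obtain ⟨a, b⟩ := e
    have hab : a ≠ b := by
      have := hE s(a, b) (Finset.mem_insert_self _ _)
      simpa using this
    have key : (∑ u : V, ∑ v : V, if (SimpleGraph.fromEdgeSet ↑(insert s(a,b) E)).Adj u v then w u v else 0)
        = (∑ u : V, ∑ v : V, if (SimpleGraph.fromEdgeSet ↑E).Adj u v then w u v else 0)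
          + (w a b + w b a) := by
      have hpt : ∀ u v : V,
          (if (SimpleGraph.fromEdgeSet ↑(insert s(a,b) E)).Adj u v then w u v else 0)
          = (if (SimpleGraph.fromEdgeSet ↑E).Adj u v then w u v else 0)
            + ((if (u = a ∧ v = b) then w u v else 0) + (if (u = b ∧ v = a) then w u v else 0)) := by
        intro u v
        by_cases hmem : (SimpleGraph.fromEdgeSet (↑E : Set (Sym2 V))).Adj u v
        · have h1 : (SimpleGraph.fromEdgeSet ↑(insert s(a,b) E)).Adj u v := by
            rw [SimpleGraph.fromEdgeSet_adj] at hmem ⊢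
            exact ⟨by simp [hmem.1], hmem.2⟩
          have h2a : ¬(u = a ∧ v = b) := by
            rintro ⟨rfl, rfl⟩
            rw [SimpleGraph.fromEdgeSet_adj] at hmem
            exact he (by simpa using hmem.1)
          have h2b : ¬(u = b ∧ v = a) := by
            rintro ⟨rfl, rfl⟩
            rw [SimpleGraph.fromEdgeSet_adj] at hmem
            exact he (by simpa [Sym2.eq_swap] using hmem.1)
          simp [h1, h2a, h2b, hmem]
        · by_cases hca : u = a ∧ v = b
          · obtain ⟨rfl, rfl⟩ := hca
            have h1 : (SimpleGraph.fromEdgeSet ↑(insert s(u,v) E)).Adj u v := by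
              rw [SimpleGraph.fromEdgeSet_adj]
              exact ⟨by simp, hab⟩
            have h2b : ¬(u = v ∧ v = u) := fun h => hab h.1
            rw [if_pos h1, if_neg hmem, if_pos ⟨rfl, rfl⟩, if_neg h2b]
            ring
          · by_cases hcb : u = b ∧ v = a
            · obtain ⟨rfl, rfl⟩ := hcb
              have h1 : (SimpleGraph.fromEdgeSet ↑(insert s(v,u) E)).Adj u v := by
                rw [SimpleGraph.fromEdgeSet_adj]
                exact ⟨by simp [Sym2.eq_swap], hab.symm⟩
              have h2a : ¬(u = v ∧ v = u) := fun h => hab h.2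
              rw [if_pos h1, if_neg hmem, if_neg hca, if_pos ⟨rfl, rfl⟩]
              ring
            · have h1 : ¬(SimpleGraph.fromEdgeSet ↑(insert s(a,b) E)).Adj u v := by
                rw [SimpleGraph.fromEdgeSet_adj]
                rintro ⟨hm, hne⟩
                simp only [Finset.coe_insert, Set.mem_insert_iff, Finset.mem_coe] at hm
                rcases hm with hm | hm
                · rcases Sym2.eq_iff.mp hm with ⟨rfl, rfl⟩ | ⟨rfl, rfl⟩
                  · exact hca ⟨rfl, rfl⟩
                  · exact hcb ⟨rfl, rfl⟩
                · exact hmem (by rw [SimpleGraph.fromEdgeSet_adj]; exact ⟨hm, hne⟩)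
              simp [h1, hmem, hca, hcb]
      rw [Finset.sum_congr rfl fun u _ => Finset.sum_congr rfl fun v _ => hpt u v]
      rw [Finset.sum_congr rfl fun u (_ : u ∈ Finset.univ) => Finset.sum_add_distrib]
      rw [Finset.sum_add_distrib]
      congr 1
      rw [Finset.sum_congr rfl fun u (_ : u ∈ Finset.univ) => Finset.sum_add_distrib]
      rw [Finset.sum_add_distrib]
      congr 1
      · have h3 : ∀ u : V, (∑ v : V, if (u = a ∧ v = b) then w u v else 0)
            = if u = a then w u b else 0 := by
          intro u
          by_cases hu : u = a
          · subst hu; simp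
          · simp [hu]
        rw [Finset.sum_congr rfl fun u _ => h3 u]
        simp
      · have h3 : ∀ u : V, (∑ v : V, if (u = b ∧ v = a) then w u v else 0)
            = if u = b then w u a else 0 := by
          intro u
          by_cases hu : u = b
          · subst hu; simp
          · simp [hu]
        rw [Finset.sum_congr rfl fun u _ => h3 u]
        simp
    rw [Finset.sum_insert he, ← ih hEd]
    unfold cost
    rw [show (Quot.mk (Sym2.Rel V) (a, b)) = s(a, b) from rfl]
    refine (?_ : ∀ S T : ℝ, S = T + (w a b + w b a) → S / 2 = Sym2.lift ⟨w, hsymm⟩ s(a, b) + T / 2) _ _ (by convert key)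
    intro S T hST
    rw [hST]
    have hl : Sym2.lift ⟨w, hsymm⟩ s(a, b) = w a b := by simp
    rw [hl, hsymm b a]
    ring

lemma cost_eq_sum_edges (w : V → V → ℝ) (hsymm : ∀ u v, w u v = w v u) (G : SimpleGraph V) :
    cost w G = ∑ e ∈ G.edgeFinset, Sym2.lift ⟨w, hsymm⟩ e := by
  have h1 : SimpleGraph.fromEdgeSet (↑G.edgeFinset : Set (Sym2 V)) = G := by
    rw [SimpleGraph.coe_edgeFinset, SimpleGraph.fromEdgeSet_edgeSet]
  conv_lhs => rw [← h1]
  exact cost_fromEdgeSet w hsymm _ fun e he =>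
    SimpleGraph.not_isDiag_of_mem_edgeSet G (by rwa [SimpleGraph.mem_edgeFinset] at he)


open SimpleGraph Finset Equiv

omit [Fintype V] in
lemma reachable_of_reachable_deleted {G : SimpleGraph V} {v w : V}
    (hvw : (G.deleteEdges {s(v, w)}).Reachable v w) :
    ∀ x y : V, G.Reachable x y → (G.deleteEdges {s(v, w)}).Reachable x y := by
  intro x y ⟨p⟩
  induction p with
  | nil => exact SimpleGraph.Reachable.refl _
  | @cons a c b h p ih =>
    refine SimpleGraph.Reachable.trans ?_ ih
    by_cases he : s(a, c) = s(v, w)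
    · rcases Sym2.eq_iff.mp he with ⟨rfl, rfl⟩ | ⟨rfl, rfl⟩
      · exact hvw
      · exact hvw.symm
    · exact SimpleGraph.Adj.reachable (by simp [h, he])

lemma exists_spanning_tree_aux : ∀ (N : ℕ) (G : SimpleGraph V), G.edgeFinset.card = N →
    G.Connected → ∃ T : SimpleGraph V, T.IsTree ∧ T ≤ G := by
  intro N
  induction N using Nat.strong_induction_on with
  | _ N ih =>
    intro G hcard hG
    by_cases hac : G.IsAcyclic
    · exact ⟨G, ⟨hG, hac⟩, le_rfl⟩
    · rw [SimpleGraph.isAcyclic_iff_forall_adj_isBridge] at hac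
      push_neg at hac
      obtain ⟨v, u, hadj, hnb⟩ := hac
      rw [SimpleGraph.isBridge_iff] at hnb
      push_neg at hnb
      have hreach : (G.deleteEdges {s(v, u)}).Reachable v u := hnb
      set G2 := G.deleteEdges {s(v, u)} with hG2
      have hG2conn : G2.Connected := by
        rw [SimpleGraph.connected_iff] at hG ⊢
        exact ⟨fun x y => reachable_of_reachable_deleted hreach x y (hG.1 x y), hG.2⟩
      have hle : G2 ≤ G := SimpleGraph.deleteEdges_le _
      have hedge : G2.edgeFinset = G.edgeFinset.erase s(v, u) := by
        apply Finset.coe_injective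
        rw [SimpleGraph.coe_edgeFinset, Finset.coe_erase, SimpleGraph.coe_edgeFinset]
        rw [hG2, SimpleGraph.edgeSet_deleteEdges]
      have hlt : G2.edgeFinset.card < N := by
        rw [hedge, ← hcard]
        exact Finset.card_erase_lt_of_mem (SimpleGraph.mem_edgeFinset.mpr hadj)
      obtain ⟨T, hT, hTle⟩ := ih _ hlt G2 (by convert rfl) hG2conn
      exact ⟨T, hT, le_trans hTle hle⟩

lemma exists_spanning_tree (G : SimpleGraph V) (hG : G.Connected) :
    ∃ T : SimpleGraph V, T.IsTree ∧ T ≤ G :=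
  exists_spanning_tree_aux G.edgeFinset.card G rfl hG


open SimpleGraph Finset Equiv

def permCongrHom {α β : Type*} (e : α ≃ β) : Equiv.Perm α →* Equiv.Perm β where
  toFun := e.permCongr
  map_one' := by ext x; simp
  map_mul' := fun p q => by ext x; simp

lemma isHamCycle_transport {α β : Type*} (e : α ≃ β) (σ : Equiv.Perm α) (h : IsHamCycle σ) :
    IsHamCycle (e.permCongr σ) := by
  have hzpow : ∀ i : ℤ, (e.permCongr σ) ^ i = e.permCongr (σ ^ i) := by
    intro i
    have : (_root_.permCongrHom e σ) ^ i = _root_.permCongrHom e (σ ^ i) := (map_zpow (_root_.permCongrHom e) σ i).symm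
    exact this
  constructor
  · obtain ⟨x0, hx0, hsc⟩ := h.1
    refine ⟨e x0, by simpa using fun hc => hx0 (e.injective hc), ?_⟩
    intro y hy
    have hy' : σ (e.symm y) ≠ e.symm y := by
      intro hc
      apply hy
      simp only [Equiv.permCongr_apply, hc, Equiv.apply_symm_apply]
    obtain ⟨i, hi⟩ := hsc hy'
    refine ⟨i, ?_⟩
    rw [hzpow i]
    simp only [Equiv.permCongr_apply, Equiv.symm_apply_apply, hi, Equiv.apply_symm_apply]
  · intro y hy
    have := h.2 (e.symm y)
    apply this
    have := congrArg e.symm hy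
    simpa using this

lemma exists_hamCycle (α : Type*) [Fintype α] (h3 : 3 ≤ Fintype.card α) :
    ∃ σ : Equiv.Perm α, IsHamCycle σ := by
  have h2 : 2 ≤ Fintype.card α := by omega
  have hfr : IsHamCycle (finRotate (Fintype.card α)) := by
    constructor
    · exact isCycle_finRotate_of_le h2
    · intro x
      have hs : x ∈ (finRotate (Fintype.card α)).support := by
        rw [support_finRotate_of_le h2]; exact Finset.mem_univ x
      exact Equiv.Perm.mem_support.mp hs
  exact ⟨(Fintype.equivFin α).symm.permCongr _, isHamCycle_transport _ _ hfr⟩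

lemma exists_cross {α : Type*} [Fintype α] (σ : Equiv.Perm α) (hσ : IsHamCycle σ)
    (P : α → Prop) (a b : α) (ha : P a) (hb : ¬ P b) : ∃ x, P x ∧ ¬ P (σ x) := by
  by_contra h
  push_neg at h
  have hall : ∀ k : ℕ, P ((σ ^ k) a) := by
    intro k
    induction k with
    | zero => simpa using ha
    | succ k ihk =>
      have := h _ ihk
      rwa [pow_succ', Equiv.Perm.mul_apply]
  obtain ⟨i, hi⟩ := hσ.1.exists_pow_eq (hσ.2 a) (hσ.2 b)
  exact hb (hi ▸ hall i)

lemma ham_reach {V : Type*} [Fintype V] (A : Set V) (σ : Equiv.Perm A) (hσ : IsHamCycle σ)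
    (xb : A) (G : SimpleGraph V)
    (hedge : ∀ y : A, y ≠ xb → G.Adj ↑y ↑(σ y)) :
    ∀ y : A, G.Reachable ↑(σ xb) ↑y := by
  have hm : 0 < orderOf σ := orderOf_pos σ
  set m := orderOf σ with hmdef
  have hpt : ∀ j, 0 < j → j < m → (σ ^ j) xb ≠ xb := by
    intro j hj0 hjm heq
    have h1 : σ ^ j = 1 := hσ.1.pow_eq_one_iff.mpr ⟨xb, hσ.2 xb, heq⟩
    have h2 : m ∣ j := orderOf_dvd_of_pow_eq_one h1
    exact absurd (Nat.le_of_dvd hj0 h2) (by omega)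
  have hstep : ∀ j, 1 ≤ j → j ≤ m → G.Reachable ↑(σ xb) ↑((σ ^ j) xb) := by
    intro j
    induction j with
    | zero => omega
    | succ k ihk =>
      intro h1 h2
      rcases Nat.eq_or_lt_of_le h1 with h | h
      · have : σ ^ (0 + 1) = σ := by simp
        have hk0 : k = 0 := by omega
        subst hk0
        rw [show ((σ ^ 1) xb) = σ xb by simp]
      · have hk1 : 1 ≤ k := by omega
        have hkm : k ≤ m := by omega
        have R := ihk hk1 hkm
        have hne : (σ ^ k) xb ≠ xb := hpt k (by omega) (by omega)
        have hadj := hedge ((σ ^ k) xb) hne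
        have hcast : (↑(σ ((σ ^ k) xb)) : V) = ↑((σ ^ (k + 1)) xb) := by
          rw [pow_succ', Equiv.Perm.mul_apply]
        rw [hcast] at hadj
        exact R.trans hadj.reachable
  intro y
  obtain ⟨i, hi⟩ := hσ.1.exists_pow_eq (hσ.2 xb) (hσ.2 y)
  have hmod : (σ ^ (i % m)) xb = y := by
    rw [hmdef, pow_mod_orderOf, hi]
  by_cases h0 : i % m = 0
  · have hy : y = xb := by rw [← hmod, h0, pow_zero]; rfl
    have := hstep m (by omega) le_rfl
    have hmm : (σ ^ m) xb = xb := by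
      rw [hmdef, pow_orderOf_eq_one]; rfl
    rw [hmm] at this
    rwa [hy]
  · have hlt : i % m < m := Nat.mod_lt _ hm
    have := hstep (i % m) (by omega) (le_of_lt hlt)
    rwa [hmod] at this

lemma sum_image_le' {α β : Type*} [DecidableEq β] (s : Finset α) (f : α → β) (g : β → ℝ)
    (hg : ∀ b, 0 ≤ g b) : ∑ e ∈ s.image f, g e ≤ ∑ a ∈ s, g (f a) := by
  classical
  induction s using Finset.induction_on with
  | empty => simp
  | @insert a s ha ih =>
    rw [Finset.image_insert, Finset.sum_insert ha]
    by_cases hfa : f a ∈ s.image f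
    · rw [Finset.insert_eq_self.mpr hfa]
      linarith [hg (f a)]
    · rw [Finset.sum_insert hfa]
      linarith

lemma sum_union_le' {β : Type*} [DecidableEq β] (s t : Finset β) (g : β → ℝ)
    (hg : ∀ b, 0 ≤ g b) : ∑ e ∈ s ∪ t, g e ≤ (∑ e ∈ s, g e) + ∑ e ∈ t, g e := by
  classical
  rw [← Finset.union_sdiff_self_eq_union, Finset.sum_union Finset.sdiff_disjoint.symm]
  have h1 : ∑ e ∈ t \ s, g e ≤ ∑ e ∈ t, g e :=
    Finset.sum_le_sum_of_subset_of_nonneg (Finset.sdiff_subset) (fun b _ _ => hg b)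
  linarith

lemma sum_insert_le' {β : Type*} [DecidableEq β] (a : β) (s : Finset β) (g : β → ℝ)
    (hg : ∀ b, 0 ≤ g b) : ∑ e ∈ insert a s, g e ≤ g a + ∑ e ∈ s, g e := by
  by_cases ha : a ∈ s
  · rw [Finset.insert_eq_self.mpr ha]
    linarith [hg a]
  · rw [Finset.sum_insert ha]

lemma build_tree_ineq (w : V → V → ℝ)
    (hsymm : ∀ u v, w u v = w v u) (hnn : ∀ u v, 0 ≤ w u v)
    (T : SimpleGraph V) (hT : IsMST w T)
    (A1 A2 : Set V) (hpart : ∀ v, v ∈ A2 ↔ v ∉ A1)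
    (σ1 : Equiv.Perm A1) (σ2 : Equiv.Perm A2)
    (h1 : IsHamCycle σ1) (h2 : IsHamCycle σ2)
    (xb : A1) (g1 g2 : V) (hg1 : g1 ∈ A1) (hg2 : g2 ∈ A2)
    (hgw : w g1 g2 ≤ w ↑xb ↑(σ1 xb)) :
    cost w T ≤ subTourCost w A1 σ1 + subTourCost w A2 σ2 := by
  classical
  set wS : Sym2 V → ℝ := Sym2.lift ⟨w, hsymm⟩ with hwS
  have hnnS : ∀ e : Sym2 V, 0 ≤ wS e := by
    intro e
    induction e with
    | _ a b => simpa [hwS] using hnn a b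
  have hne12 : g1 ≠ g2 := fun h => ((hpart g2).mp hg2) (h ▸ hg1)
  set yb : A2 := ⟨g2, hg2⟩ with hyb
  set E1 : Finset (Sym2 V) :=
    (Finset.univ.erase xb).image (fun y : A1 => s((y : V), (σ1 y : V))) with hE1
  set E2 : Finset (Sym2 V) :=
    (Finset.univ.erase yb).image (fun y : A2 => s((y : V), (σ2 y : V))) with hE2
  set E : Finset (Sym2 V) := insert s(g1, g2) (E1 ∪ E2) with hE
  have hfix1 : ∀ y : A1, (y : V) ≠ ((σ1 y : A1) : V) := by
    intro y hc
    exact h1.2 y (Subtype.ext hc.symm)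
  have hfix2 : ∀ y : A2, (y : V) ≠ ((σ2 y : A2) : V) := by
    intro y hc
    exact h2.2 y (Subtype.ext hc.symm)
  have hdiag : ∀ e ∈ E, ¬ e.IsDiag := by
    intro e he
    rw [hE, Finset.mem_insert] at he
    rcases he with rfl | he
    · simpa using hne12
    · rw [Finset.mem_union] at he
      rcases he with he | he
      · rw [hE1, Finset.mem_image] at he
        obtain ⟨y, -, rfl⟩ := he
        simpa using hfix1 y
      · rw [hE2, Finset.mem_image] at he
        obtain ⟨y, -, rfl⟩ := he
        simpa using hfix2 y
  set G' : SimpleGraph V := SimpleGraph.fromEdgeSet ↑E with hG'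
  have hedge1 : ∀ y : A1, y ≠ xb → G'.Adj ↑y ↑(σ1 y) := by
    intro y hy
    rw [hG', SimpleGraph.fromEdgeSet_adj]
    refine ⟨?_, hfix1 y⟩
    rw [Finset.mem_coe, hE]
    exact Finset.mem_insert_of_mem (Finset.mem_union_left _
      (Finset.mem_image.mpr ⟨y, Finset.mem_erase.mpr ⟨hy, Finset.mem_univ y⟩, rfl⟩))
  have hedge2 : ∀ y : A2, y ≠ yb → G'.Adj ↑y ↑(σ2 y) := by
    intro y hy
    rw [hG', SimpleGraph.fromEdgeSet_adj]
    refine ⟨?_, hfix2 y⟩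
    rw [Finset.mem_coe, hE]
    exact Finset.mem_insert_of_mem (Finset.mem_union_right _
      (Finset.mem_image.mpr ⟨y, Finset.mem_erase.mpr ⟨hy, Finset.mem_univ y⟩, rfl⟩))
  have reach1 := ham_reach A1 σ1 h1 xb G' hedge1
  have reach2 := ham_reach A2 σ2 h2 yb G' hedge2
  have hgadj : G'.Adj g1 g2 := by
    rw [hG', SimpleGraph.fromEdgeSet_adj]
    exact ⟨by rw [Finset.mem_coe, hE]; exact Finset.mem_insert_self _ _, hne12⟩
  have hz : ∀ z : V, G'.Reachable z g1 := by
    intro z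
    by_cases hz1 : z ∈ A1
    · exact (reach1 ⟨z, hz1⟩).symm.trans (reach1 ⟨g1, hg1⟩)
    · have hz2 : z ∈ A2 := (hpart z).mpr hz1
      have h3 : G'.Reachable z g2 := (reach2 ⟨z, hz2⟩).symm.trans (reach2 yb)
      exact h3.trans hgadj.symm.reachable
  have hconn : G'.Connected := by
    rw [SimpleGraph.connected_iff]
    exact ⟨fun x y => (hz x).trans (hz y).symm, ⟨g1⟩⟩
  obtain ⟨T', hT', hT'le⟩ := exists_spanning_tree G' hconn
  have step1 : cost w T ≤ cost w G' :=
    le_trans (hT.2 T' hT') (myCost_mono w hnn hT'le)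
  have step2 : cost w G' = ∑ e ∈ E, wS e := cost_fromEdgeSet w hsymm E hdiag
  have step3 : ∑ e ∈ E, wS e ≤ wS s(g1, g2) + ((∑ e ∈ E1, wS e) + ∑ e ∈ E2, wS e) := by
    rw [hE]
    calc ∑ e ∈ insert s(g1, g2) (E1 ∪ E2), wS e
        ≤ wS s(g1, g2) + ∑ e ∈ E1 ∪ E2, wS e := sum_insert_le' _ _ _ hnnS
      _ ≤ wS s(g1, g2) + ((∑ e ∈ E1, wS e) + ∑ e ∈ E2, wS e) := by
          linarith [sum_union_le' E1 E2 wS hnnS]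
  have hsub1 : ∑ e ∈ E1, wS e ≤ ∑ y ∈ Finset.univ.erase xb, w (y : V) ((σ1 y : A1) : V) := by
    rw [hE1]
    have := sum_image_le' (Finset.univ.erase xb)
      (fun y : A1 => s((y : V), (σ1 y : V))) wS hnnS
    simpa [hwS] using this
  have hsub2 : ∑ e ∈ E2, wS e ≤ ∑ y ∈ Finset.univ.erase yb, w (y : V) ((σ2 y : A2) : V) := by
    rw [hE2]
    have := sum_image_le' (Finset.univ.erase yb)
      (fun y : A2 => s((y : V), (σ2 y : V))) wS hnnS
    simpa [hwS] using this
  have htour1 : (∑ y ∈ Finset.univ.erase xb, w (y : V) ((σ1 y : A1) : V))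
      + w (xb : V) ((σ1 xb : A1) : V) = subTourCost w A1 σ1 :=
    Finset.sum_erase_add _ _ (Finset.mem_univ xb)
  have htour2 : (∑ y ∈ Finset.univ.erase yb, w (y : V) ((σ2 y : A2) : V))
      + w (yb : V) ((σ2 yb : A2) : V) = subTourCost w A2 σ2 :=
    Finset.sum_erase_add _ _ (Finset.mem_univ yb)
  have hlift : wS s(g1, g2) = w g1 g2 := by simp [hwS]
  have hyb2 : (0 : ℝ) ≤ w (yb : V) ((σ2 yb : A2) : V) := hnn _ _
  linarith [step1, step2.le, step3, hsub1, hsub2]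

end MyAux

theorem stmt_15 {V : Type*} [Fintype V]
    {n : ℕ} (hn : 3 ≤ n)
    (p q : Fin n → V) (hpq : Function.Bijective (Sum.elim p q))
    (w : V → V → ℝ)
    (hw_self : ∀ v, w v v = 0)
    (hw_symm : ∀ u v, w u v = w v u)
    (hw_nonneg : ∀ u v, 0 ≤ w u v)
    (hw_tri : ∀ u v x, w u v ≤ w u x + w x v)
    (T : SimpleGraph V) (hT : IsMST w T)
    (vL vR : V) (hadj : T.Adj vL vR)
    (hmax : ∀ a b, T.Adj a b → w a b ≤ w vL vR)
    (VL VR : Set V)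
    (hVL : VL = {x | (T.deleteEdges {s(vL, vR)}).Reachable vL x})
    (hVR : VR = {x | (T.deleteEdges {s(vL, vR)}).Reachable vR x})
    (hpair : (∃ i, p i ∈ VL ∧ q i ∈ VL) ∨ (∃ i, p i ∈ VR ∧ q i ∈ VR)) :
    (∀ B : Set V, (∀ i, (p i ∈ B ↔ q i ∉ B)) →
      ∀ (σb : Equiv.Perm B) (σr : Equiv.Perm (Bᶜ : Set V)),
        IsHamCycle σb → IsHamCycle σr →
          cost w T ≤ subTourCost w B σb + subTourCost w Bᶜ σr) ∧
    cost w T ≤ OPTtspSum w p q := by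
  classical
  have hTtree : T.IsTree := hT.1
  have hTconn : T.Connected := hTtree.isConnected
  have hbridge : ¬ (T.deleteEdges {s(vL, vR)}).Reachable vL vR := by
    have hac := hTtree.IsAcyclic
    rw [SimpleGraph.isAcyclic_iff_forall_adj_isBridge] at hac
    have hb := hac hadj
    rw [SimpleGraph.isBridge_iff] at hb
    exact hb
  have hvLL : vL ∈ VL := by rw [hVL]; exact SimpleGraph.Reachable.refl _
  have hvRR : vR ∈ VR := by rw [hVR]; exact SimpleGraph.Reachable.refl _
  have hdisj : ∀ x, x ∈ VL → x ∈ VR → False := by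
    intro x hxL hxR
    rw [hVL] at hxL
    rw [hVR] at hxR
    exact hbridge (hxL.trans hxR.symm)
  have hcover : ∀ x, x ∈ VL ∨ x ∈ VR := by
    intro x
    obtain ⟨pw⟩ := hTconn.preconnected vL x
    have key : ∀ (a b2 : V), T.Walk a b2 → (a ∈ VL ∨ a ∈ VR) → (b2 ∈ VL ∨ b2 ∈ VR) := by
      intro a b2 pw2
      induction pw2 with
      | nil => exact id
      | @cons a c b2 h pw3 ih =>
        intro ha
        apply ih
        by_cases he : s(a, c) = s(vL, vR)
        · rcases Sym2.eq_iff.mp he with ⟨rfl, rfl⟩ | ⟨rfl, rfl⟩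
          · right; exact hvRR
          · left; exact hvLL
        · have hadj2 : (T.deleteEdges {s(vL, vR)}).Adj a c := by simp [h, he]
          rcases ha with ha | ha
          · left
            rw [hVL] at ha ⊢
            exact ha.trans hadj2.reachable
          · right
            rw [hVR] at ha ⊢
            exact ha.trans hadj2.reachable
    exact key vL x pw (Or.inl hvLL)
  have hcut : ∀ u v : V, u ∈ VL → v ∈ VR → w vL vR ≤ w u v := by
    intro u v huL hvR2
    by_cases hsame : s(u, v) = s(vL, vR)
    · rcases Sym2.eq_iff.mp hsame with ⟨rfl, rfl⟩ | ⟨rfl, rfl⟩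
      · exact le_rfl
      · exact (hdisj _ huL hvRR).elim
    · have hneuv : u ≠ v := fun h => hdisj u huL (h ▸ hvR2)
      have hTadjuv : ¬ T.Adj u v := by
        intro hadj2
        have hadj3 : (T.deleteEdges {s(vL, vR)}).Adj u v := by simp [hadj2, hsame]
        apply hdisj v _ hvR2
        rw [hVL] at huL ⊢
        exact huL.trans hadj3.reachable
      set wS : Sym2 V → ℝ := Sym2.lift ⟨w, hw_symm⟩ with hwS
      set E' : Finset (Sym2 V) := insert s(u, v) (T.edgeFinset.erase s(vL, vR)) with hE'
      have hnotmem : s(u, v) ∉ T.edgeFinset.erase s(vL, vR) := by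
        intro hmem
        exact hTadjuv ((SimpleGraph.mem_edgeSet _).mp
          (SimpleGraph.mem_edgeFinset.mp (Finset.mem_of_mem_erase hmem)))
      have hdiag' : ∀ e ∈ E', ¬ e.IsDiag := by
        intro e he
        rw [hE', Finset.mem_insert] at he
        rcases he with rfl | he
        · simpa using hneuv
        · exact SimpleGraph.not_isDiag_of_mem_edgeSet T
            (SimpleGraph.mem_edgeFinset.mp (Finset.mem_of_mem_erase he))
      set G' : SimpleGraph V := SimpleGraph.fromEdgeSet ↑E' with hG'
      have hdelle : T.deleteEdges {s(vL, vR)} ≤ G' := by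
        intro a b hab
        rw [SimpleGraph.deleteEdges_adj] at hab
        rw [hG', SimpleGraph.fromEdgeSet_adj]
        refine ⟨?_, hab.1.ne⟩
        rw [Finset.mem_coe, hE']
        refine Finset.mem_insert_of_mem (Finset.mem_erase.mpr ⟨?_, ?_⟩)
        · simpa using hab.2
        · exact SimpleGraph.mem_edgeFinset.mpr ((SimpleGraph.mem_edgeSet _).mpr hab.1)
      have hG'uv : G'.Adj u v := by
        rw [hG', SimpleGraph.fromEdgeSet_adj]
        exact ⟨by rw [Finset.mem_coe, hE']; exact Finset.mem_insert_self _ _, hneuv⟩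
      have hzz : ∀ x, G'.Reachable x vL := by
        intro x
        rcases hcover x with hx | hx
        · rw [hVL] at hx
          exact (hx.mono hdelle).symm
        · rw [hVR] at hx
          have h1 : G'.Reachable vR x := hx.mono hdelle
          have h2 : G'.Reachable vR v := by
            have := hvR2
            rw [hVR] at this
            exact this.mono hdelle
          have h3 : G'.Reachable u vL := by
            have := huL
            rw [hVL] at this
            exact (this.mono hdelle).symm
          exact h1.symm.trans (h2.trans (hG'uv.symm.reachable.trans h3))
      have hconn : G'.Connected := by
        rw [SimpleGraph.connected_iff]
        exact ⟨fun x y => (hzz x).trans (hzz y).symm, ⟨vL⟩⟩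
      obtain ⟨T'', hT'', hT''le⟩ := exists_spanning_tree G' hconn
      have step1 : cost w T ≤ cost w G' :=
        le_trans (hT.2 T'' hT'') (myCost_mono w hw_nonneg hT''le)
      have step2 : cost w G' = ∑ e ∈ E', wS e := cost_fromEdgeSet w hw_symm E' hdiag'
      have step3 : ∑ e ∈ E', wS e = w u v + ((cost w T) - w vL vR) := by
        rw [hE', Finset.sum_insert hnotmem]
        have h4 : (∑ e ∈ T.edgeFinset.erase s(vL, vR), wS e) + wS s(vL, vR)
            = ∑ e ∈ T.edgeFinset, wS e :=
          Finset.sum_erase_add _ _ (SimpleGraph.mem_edgeFinset.mpr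
            ((SimpleGraph.mem_edgeSet _).mpr hadj))
        have h5 : cost w T = ∑ e ∈ T.edgeFinset, wS e := cost_eq_sum_edges w hw_symm T
        have h6 : wS s(u, v) = w u v := by simp [hwS]
        have h7 : wS s(vL, vR) = w vL vR := by simp [hwS]
        rw [h6]
        rw [h5, ← h4, h7]
        ring
      rw [step2, step3] at step1
      linarith
  have part1 : ∀ B : Set V, (∀ i, (p i ∈ B ↔ q i ∉ B)) →
      ∀ (σb : Equiv.Perm B) (σr : Equiv.Perm (Bᶜ : Set V)),
        IsHamCycle σb → IsHamCycle σr →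
          cost w T ≤ subTourCost w B σb + subTourCost w Bᶜ σr := by
    intro B hBiff σb σr hhb hhr
    obtain ⟨x, y, hxB, hyB, hside⟩ : ∃ x y, x ∈ B ∧ y ∉ B ∧
        ((x ∈ VL ∧ y ∈ VL) ∨ (x ∈ VR ∧ y ∈ VR)) := by
      rcases hpair with ⟨i, hp, hq⟩ | ⟨i, hp, hq⟩
      · by_cases hpB : p i ∈ B
        · exact ⟨p i, q i, hpB, (hBiff i).mp hpB, Or.inl ⟨hp, hq⟩⟩
        · have hqB : q i ∈ B := by
            by_contra h
            exact hpB ((hBiff i).mpr h)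
          exact ⟨q i, p i, hqB, hpB, Or.inl ⟨hq, hp⟩⟩
      · by_cases hpB : p i ∈ B
        · exact ⟨p i, q i, hpB, (hBiff i).mp hpB, Or.inr ⟨hp, hq⟩⟩
        · have hqB : q i ∈ B := by
            by_contra h
            exact hpB ((hBiff i).mpr h)
          exact ⟨q i, p i, hqB, hpB, Or.inr ⟨hq, hp⟩⟩
    have main2 : ∀ (A1 A2 : Set V), (∀ z, z ∈ A2 ↔ z ∉ A1) →
        ∀ (σ1 : Equiv.Perm A1) (σ2 : Equiv.Perm A2), IsHamCycle σ1 → IsHamCycle σ2 →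
        (∃ a : V, a ∈ A1 ∧ a ∈ VL) → (∃ b : V, b ∈ A1 ∧ b ∈ VR) →
        (∃ u v : V, T.Adj u v ∧ u ∈ A1 ∧ v ∈ A2) →
        cost w T ≤ subTourCost w A1 σ1 + subTourCost w A2 σ2 := by
      rintro A1 A2 hpartA σ1 σ2 hH1 hH2 ⟨a, haA, haL⟩ ⟨b, hbA, hbR⟩ ⟨u, v, huv, huA, hvA⟩
      obtain ⟨xbar, hxL, hxnotL⟩ := exists_cross σ1 hH1 (fun z : A1 => (z : V) ∈ VL)
        ⟨a, haA⟩ ⟨b, hbA⟩ haL (fun hc => hdisj b hc hbR)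
      have hxR' : ((σ1 xbar : A1) : V) ∈ VR := (hcover _).resolve_left hxnotL
      have hwx : w vL vR ≤ w ↑xbar ↑(σ1 xbar) := hcut _ _ hxL hxR'
      have hguv : w u v ≤ w vL vR := hmax u v huv
      exact build_tree_ineq w hw_symm hw_nonneg T hT A1 A2 hpartA σ1 σ2 hH1 hH2 xbar u v
        huA hvA (le_trans hguv hwx)
    have hbic : ∃ u v : V, T.Adj u v ∧ u ∈ B ∧ v ∉ B := by
      obtain ⟨pwalk⟩ := hTconn.preconnected x y
      have key : ∀ (a c : V), T.Walk a c → a ∈ B → c ∉ B →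
          ∃ u v, T.Adj u v ∧ u ∈ B ∧ v ∉ B := by
        intro a c pw2
        induction pw2 with
        | nil => intro h1 h2; exact absurd h1 h2
        | @cons a d c h pw3 ih =>
          intro h1 h2
          by_cases hd : d ∈ B
          · exact ih hd h2
          · exact ⟨a, d, h, h1, hd⟩
      exact key x y pwalk hxB hyB
    obtain ⟨u, v, huvadj, huB, hvB⟩ := hbic
    have hpart1 : ∀ z, z ∈ Bᶜ ↔ z ∉ B := fun z => Iff.rfl
    have hpart2 : ∀ z, z ∈ B ↔ z ∉ Bᶜ := fun z => by simp
    rcases hside with ⟨hxL, hyL⟩ | ⟨hxR, hyR⟩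
    · by_cases hvRB : vR ∈ B
      · exact main2 B Bᶜ hpart1 σb σr hhb hhr ⟨x, hxB, hxL⟩ ⟨vR, hvRB, hvRR⟩
          ⟨u, v, huvadj, huB, hvB⟩
      · have h9 := main2 Bᶜ B hpart2 σr σb hhr hhb ⟨y, hyB, hyL⟩ ⟨vR, hvRB, hvRR⟩
          ⟨v, u, huvadj.symm, hvB, huB⟩
        linarith
    · by_cases hvLB : vL ∈ B
      · exact main2 B Bᶜ hpart1 σb σr hhb hhr ⟨vL, hvLB, hvLL⟩ ⟨x, hxB, hxR⟩
          ⟨u, v, huvadj, huB, hvB⟩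
      · have h9 := main2 Bᶜ B hpart2 σr σb hhr hhb ⟨vL, hvLB, hvLL⟩ ⟨y, hyB, hyR⟩
          ⟨v, u, huvadj.symm, hvB, huB⟩
        linarith
  refine ⟨part1, ?_⟩
  -- Part 2: the sInf bound
  have hpinj : Function.Injective p := by
    intro i j h
    have h2 := hpq.1 (a₁ := Sum.inl i) (a₂ := Sum.inl j) (by simpa using h)
    simpa using h2
  have hdisjpq : ∀ i j, p i ≠ q j := by
    intro i j h
    have h2 := hpq.1 (a₁ := Sum.inl i) (a₂ := Sum.inr j) (by simpa using h)
    simpa using h2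
  set B0 : Set V := Set.range p with hB0def
  have hB0 : ∀ i, (p i ∈ B0 ↔ q i ∉ B0) := by
    intro i
    constructor
    · rintro - ⟨j, hj⟩
      exact hdisjpq j i hj
    · intro _
      exact ⟨i, rfl⟩
  have hcardB0 : Fintype.card B0 = n := by
    have h2 := Set.card_range_of_injective hpinj
    simpa using h2
  have hcardV : Fintype.card V = n + n := by
    rw [← Fintype.card_of_bijective hpq]
    simp
  have hcardB0c : Fintype.card ↥(B0ᶜ) = n := by
    rw [Fintype.card_compl_set, hcardB0, hcardV]
    omega
  obtain ⟨σ1, hσ1⟩ := exists_hamCycle ↥B0 (by rw [hcardB0]; omega)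
  obtain ⟨σ2, hσ2⟩ := exists_hamCycle ↥(B0ᶜ) (by rw [hcardB0c]; omega)
  refine le_csInf ⟨subTourCost w B0 σ1 + subTourCost w B0ᶜ σ2,
    ⟨B0, hB0, σ1, σ2, hσ1, hσ2, rfl⟩⟩ ?_
  rintro c ⟨B, hB, σb, σr, hhb, hhr, rfl⟩
  exact part1 B hB σb σr hhb hhr
end

section
/- Let F be a 2-factor of G′ (a spanning subgraph of G′ in which every vertex has degree exactly 2) such that the length of every cycle of F is divisible by 6. Then F contains all dummy edges {p_i, d_i} and {q_i, d_i}; the set M of edges of F joining two real vertices is a perfect matching on the real vertices; and there exists a 2-coloring χ of the real vertices with colors red and blue such that χ(p_i) ≠ χ(q_i) for every i and every edge of M joins two vertices of the same color. (That is, any feasible C_{6×}-cover of G′ induces a feasible 2-matching.) -/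
open scoped Classical

namespace Stmt19Aux

open SimpleGraph

variable {W : Type*} [Fintype W] {F : SimpleGraph W}

theorem nbhd (hdeg : ∀ v : W, F.degree v = 2) {v a b : W} (ha : F.Adj v a) (hb : F.Adj v b)
    (hab : a ≠ b) {x : W} (hx : F.Adj v x) : x = a ∨ x = b := by
  have hsub : ({a, b} : Finset W) ⊆ F.neighborFinset v := by
    intro y hy
    simp only [Finset.mem_insert, Finset.mem_singleton] at hy
    rcases hy with rfl | rfl <;> simpa [SimpleGraph.mem_neighborFinset]
  have hcard : ({a, b} : Finset W).card = 2 := by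
    rw [Finset.card_insert_of_notMem (by simpa using hab), Finset.card_singleton]
  have heq : F.neighborFinset v = {a, b} := by
    refine (Finset.eq_of_subset_of_card_le hsub ?_).symm
    rw [hcard, SimpleGraph.card_neighborFinset_eq_degree, hdeg]
  have : x ∈ F.neighborFinset v := (SimpleGraph.mem_neighborFinset _ _ _).2 hx
  rw [heq] at this
  simpa using this

theorem exists_other (hdeg : ∀ v : W, F.degree v = 2) {u v : W} (h : F.Adj u v) :
    ∃ x, F.Adj v x ∧ x ≠ u := by
  by_contra hc
  push_neg at hc
  have hsub : F.neighborFinset v ⊆ {u} := by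
    intro y hy
    rw [SimpleGraph.mem_neighborFinset] at hy
    simp [hc y hy]
  have := Finset.card_le_card hsub
  rw [SimpleGraph.card_neighborFinset_eq_degree, hdeg] at this
  simp at this

noncomputable def other (F : SimpleGraph W) (u v : W) : W :=
  if h : ∃ x, F.Adj v x ∧ x ≠ u then h.choose else v

theorem other_adj (hdeg : ∀ v : W, F.degree v = 2) {u v : W} (h : F.Adj u v) :
    F.Adj v (other F u v) ∧ other F u v ≠ u := by
  have he := exists_other hdeg h
  rw [other, dif_pos he]
  exact he.choose_spec

theorem other_eq (hdeg : ∀ v : W, F.degree v = 2) {u v y : W} (h : F.Adj u v)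
    (hy : F.Adj v y) (hyu : y ≠ u) : y = other F u v := by
  obtain ⟨ho, hne⟩ := other_adj hdeg h
  rcases nbhd hdeg ho h.symm hne hy with h1 | h1
  · exact h1
  · exact absurd h1 hyu

theorem other_inj (hdeg : ∀ v : W, F.degree v = 2) {u u' v : W} (h : F.Adj u v)
    (h' : F.Adj u' v) (he : other F u v = other F u' v) : u = u' := by
  obtain ⟨ho, hne⟩ := other_adj hdeg h
  obtain ⟨ho', hne'⟩ := other_adj hdeg h'
  rcases nbhd hdeg ho h.symm hne h'.symm with h1 | h1
  · exact absurd (h1.trans he) hne'.symm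
  · exact h1.symm

noncomputable def traj (F : SimpleGraph W) (x y : W) : ℕ → W × W
  | 0 => (x, y)
  | (k + 1) => ((traj F x y k).2, other F (traj F x y k).1 (traj F x y k).2)

theorem traj_adj (hdeg : ∀ v : W, F.degree v = 2) {x y : W} (hxy : F.Adj x y) :
    ∀ k, F.Adj (traj F x y k).1 (traj F x y k).2 := by
  intro k
  induction k with
  | zero => exact hxy
  | succ k ih => exact (other_adj hdeg ih).1

theorem traj_cancel (hdeg : ∀ v : W, F.degree v = 2) {x y : W} (hxy : F.Adj x y)
    {a b : ℕ} (s : ℕ) (h : traj F x y (a + s) = traj F x y (b + s)) :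
    traj F x y a = traj F x y b := by
  induction s with
  | zero => exact h
  | succ s ih =>
    apply ih
    have ha := traj_adj hdeg hxy (a + s)
    have hb := traj_adj hdeg hxy (b + s)
    have h1 : (traj F x y (a + s)).2 = (traj F x y (b + s)).2 := by
      have := congrArg Prod.fst h
      simpa [traj] using this
    have h2 : other F (traj F x y (a + s)).1 (traj F x y (a + s)).2
        = other F (traj F x y (b + s)).1 (traj F x y (b + s)).2 := by
      have := congrArg Prod.snd h
      simpa [traj] using this
    rw [h1] at h2 ha
    exact Prod.ext (other_inj hdeg ha (h1 ▸ hb) h2) h1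


/-- first coordinate of the trajectory -/
noncomputable def tc (F : SimpleGraph W) (x y : W) (k : ℕ) : W := (traj F x y k).1

theorem tc_succ (x y : W) (k : ℕ) : tc F x y (k + 1) = (traj F x y k).2 := rfl

theorem traj_eq (x y : W) (k : ℕ) : traj F x y k = (tc F x y k, tc F x y (k + 1)) := rfl

theorem adjc (hdeg : ∀ v : W, F.degree v = 2) {x y : W} (hxy : F.Adj x y) (k : ℕ) :
    F.Adj (tc F x y k) (tc F x y (k + 1)) := traj_adj hdeg hxy k

theorem c_step (x y : W) (k : ℕ) :
    tc F x y (k + 2) = other F (tc F x y k) (tc F x y (k + 1)) := rfl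

theorem c_ne (hdeg : ∀ v : W, F.degree v = 2) {x y : W} (hxy : F.Adj x y) (k : ℕ) :
    tc F x y (k + 2) ≠ tc F x y k :=
  (other_adj hdeg (traj_adj hdeg hxy k)).2

theorem exists_period (hdeg : ∀ v : W, F.degree v = 2) {x y : W} (hxy : F.Adj x y) :
    ∃ N, 0 < N ∧ traj F x y N = traj F x y 0 := by
  obtain ⟨m, n, hmn, he⟩ := Finite.exists_ne_map_eq_of_infinite (traj F x y)
  rcases Nat.lt_or_ge m n with h | h
  · refine ⟨n - m, by omega, traj_cancel hdeg hxy m ?_⟩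
    rw [Nat.zero_add, Nat.sub_add_cancel h.le]
    exact he.symm
  · have h' : n < m := by omega
    refine ⟨m - n, by omega, traj_cancel hdeg hxy n ?_⟩
    rw [Nat.zero_add, Nat.sub_add_cancel h'.le]
    exact he

section Period

variable {x y : W} {T : ℕ}

theorem traj_add_period (hper : traj F x y T = traj F x y 0) (k : ℕ) :
    traj F x y (k + T) = traj F x y k := by
  induction k with
  | zero => simpa using hper
  | succ k ih =>
    have : k + 1 + T = (k + T) + 1 := by omega
    rw [this]
    show ((traj F x y (k+T)).2, other F (traj F x y (k+T)).1 (traj F x y (k+T)).2)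
      = ((traj F x y k).2, other F (traj F x y k).1 (traj F x y k).2)
    rw [ih]

theorem traj_add_mul (hper : traj F x y T = traj F x y 0) (k m : ℕ) :
    traj F x y (k + m * T) = traj F x y k := by
  induction m with
  | zero => simp
  | succ m ih =>
    have : k + (m + 1) * T = (k + m * T) + T := by ring
    rw [this, traj_add_period hper, ih]

theorem traj_mod (hper : traj F x y T = traj F x y 0) (hT0 : 0 < T) (k : ℕ) :
    traj F x y k = traj F x y (k % T) := by
  conv_lhs => rw [show k = k % T + (k / T) * T by rw [Nat.mod_add_div']]
  rw [traj_add_mul hper]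

theorem tc_add_period (hper : traj F x y T = traj F x y 0) (k : ℕ) :
    tc F x y (k + T) = tc F x y k := congrArg Prod.fst (traj_add_period hper k)

theorem tc_mod (hper : traj F x y T = traj F x y 0) (hT0 : 0 < T) (k : ℕ) :
    tc F x y k = tc F x y (k % T) := congrArg Prod.fst (traj_mod hper hT0 k)

theorem rev_step (hdeg : ∀ v : W, F.degree v = 2) (hxy : F.Adj x y)
    {a b : ℕ} (hb : 1 ≤ b)
    (h : traj F x y a = ((traj F x y b).2, (traj F x y b).1)) :
    traj F x y (a + 1) = ((traj F x y (b - 1)).2, (traj F x y (b - 1)).1) := by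
  set c := tc F x y with hc
  obtain ⟨b', rfl⟩ : ∃ b', b = b' + 1 := ⟨b - 1, by omega⟩
  simp only [Nat.add_sub_cancel]
  rw [traj_eq, traj_eq] at h ⊢
  rw [Prod.mk.injEq] at h ⊢
  obtain ⟨h1, h2⟩ := h
  -- h1 : c a = c (b'+2), h2 : c (a+1) = c (b'+1)
  refine ⟨h2, ?_⟩
  -- goal : c (a+2) = c b'
  have hadj : F.Adj (c (b' + 2)) (c (b' + 1)) := (adjc hdeg hxy (b' + 1)).symm
  have hbadj : F.Adj (c (b' + 1)) (c b') := (adjc hdeg hxy b').symm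
  have hne : c b' ≠ c (b' + 2) := (c_ne hdeg hxy b').symm
  have := other_eq hdeg hadj hbadj hne
  rw [c_step, h1, h2]
  exact this.symm

theorem rev_iter (hdeg : ∀ v : W, F.degree v = 2) (hxy : F.Adj x y)
    (s : ℕ) : ∀ a b : ℕ, s ≤ b →
    traj F x y a = ((traj F x y b).2, (traj F x y b).1) →
    traj F x y (a + s) = ((traj F x y (b - s)).2, (traj F x y (b - s)).1) := by
  induction s with
  | zero => intro a b _ h; simpa using h
  | succ s ih =>
    intro a b hs h
    have h1 := rev_step hdeg hxy (by omega : 1 ≤ b) h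
    have h2 := ih (a + 1) (b - 1) (by omega) h1
    have e1 : a + 1 + s = a + (s + 1) := by omega
    have e2 : b - 1 - s = b - (s + 1) := by omega
    rw [e1, e2] at h2
    exact h2

theorem no_rev (hdeg : ∀ v : W, F.degree v = 2) (hxy : F.Adj x y)
    (hT0 : 0 < T) (hper : traj F x y T = traj F x y 0)
    (a b : ℕ) (h : traj F x y a = ((traj F x y b).2, (traj F x y b).1)) : False := by
  set c := tc F x y with hc
  -- lift b
  set b' := b + (a + 1) * T with hb'
  have hb'a : a < b' := by
    have : T ≥ 1 := hT0
    calc a < (a+1) * 1 := by omega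
    _ ≤ b + (a+1) * T := by nlinarith
  have h' : traj F x y a = ((traj F x y b').2, (traj F x y b').1) := by
    rw [hb', traj_add_mul hper]; exact h
  rcases Nat.even_or_odd (b' - a) with ⟨s, hs⟩ | ⟨s, hs⟩
  · -- a + s = b' - s
    have hsb : s ≤ b' := by omega
    have h2 := rev_iter hdeg hxy s a b' hsb h'
    have he : a + s = b' - s := by omega
    rw [← he] at h2
    have : c (a + s) = c (a + s + 1) := by
      have := congrArg Prod.fst h2
      simpa [traj_eq] using this
    have hadj : F.Adj (c (a + s)) (c (a + s + 1)) := adjc hdeg hxy (a + s)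
    rw [← this] at hadj
    exact F.irrefl hadj
  · -- b' - a odd, use s with a + s = (b' - s) + 1
    have hsb : s + 1 ≤ b' := by omega
    have h2 := rev_iter hdeg hxy (s + 1) a b' hsb h'
    have he : a + (s + 1) = (b' - (s + 1)) + 1 := by omega
    set u := b' - (s + 1) with hu
    rw [he] at h2
    -- h2 : traj (u+1) = (snd (traj u), fst (traj u)) : (c (u+1), c (u+2)) = (c (u+1), c u)
    have : c (u + 2) = c u := by
      have := congrArg Prod.snd h2
      simpa [traj_eq] using this
    exact c_ne hdeg hxy u this

end Period

section Period2

variable {x y : W} {T : ℕ}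

theorem nbr (hdeg : ∀ v : W, F.degree v = 2) (hxy : F.Adj x y) (k : ℕ) {z : W}
    (hz : F.Adj (tc F x y (k + 1)) z) : z = tc F x y k ∨ z = tc F x y (k + 2) := by
  have h1 : F.Adj (tc F x y (k + 1)) (tc F x y k) := (adjc hdeg hxy k).symm
  have h2 : F.Adj (tc F x y (k + 1)) (tc F x y (k + 2)) := adjc hdeg hxy (k + 1)
  have hne : tc F x y k ≠ tc F x y (k + 2) := (c_ne hdeg hxy k).symm
  exact nbhd hdeg h1 h2 hne hz

theorem T_ge_three (hdeg : ∀ v : W, F.degree v = 2) (hxy : F.Adj x y)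
    (hT0 : 0 < T) (hper : traj F x y T = traj F x y 0) : 3 ≤ T := by
  by_contra hlt
  have hT2 : T = 1 ∨ T = 2 := by omega
  rcases hT2 with rfl | rfl
  · have h1 : tc F x y 1 = tc F x y 0 := congrArg Prod.fst hper
    have : tc F x y 1 = y := rfl
    have h0 : tc F x y 0 = x := rfl
    rw [this, h0] at h1
    exact F.irrefl (h1 ▸ hxy)
  · exact c_ne hdeg hxy 0 (congrArg Prod.fst hper)

theorem c_inj (hdeg : ∀ v : W, F.degree v = 2) (hxy : F.Adj x y)
    (hT0 : 0 < T) (hper : traj F x y T = traj F x y 0)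
    (hmin : ∀ k, 0 < k → k < T → traj F x y k ≠ traj F x y 0)
    {j k : ℕ} (hjk : j < k) (hkT : k < T) (heq : tc F x y j = tc F x y k) : False := by
  have heq' : tc F x y (j + T) = tc F x y (k + T) := by
    rw [tc_add_period hper, tc_add_period hper]; exact heq
  obtain ⟨J, hJ⟩ : ∃ J, j + T = J + 1 := ⟨j + T - 1, by omega⟩
  have hadj : F.Adj (tc F x y (J + 1)) (tc F x y (k + T + 1)) := by
    rw [← hJ, heq']; exact adjc hdeg hxy (k + T)
  rcases nbr hdeg hxy J hadj with h1 | h1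
  · -- reversal
    apply no_rev hdeg hxy hT0 hper (k + T) J
    rw [traj_eq, traj_eq, Prod.mk.injEq]
    constructor
    · rw [← hJ]; exact heq'.symm
    · exact h1
  · -- same pair
    have hpair : traj F x y (j + T) = traj F x y (k + T) := by
      rw [traj_eq, traj_eq, Prod.mk.injEq]
      refine ⟨heq', ?_⟩
      have hj2 : j + T + 1 = J + 2 := by omega
      rw [hj2, ← h1]
    have h2 : traj F x y j = traj F x y k := traj_cancel hdeg hxy T hpair
    have h3 : traj F x y 0 = traj F x y (k - j) := by
      apply traj_cancel hdeg hxy j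
      rw [Nat.zero_add, Nat.sub_add_cancel hjk.le]
      exact h2
    exact hmin (k - j) (by omega) (by omega) h3.symm

theorem c_mod (hdeg : ∀ v : W, F.degree v = 2) (hxy : F.Adj x y)
    (hT0 : 0 < T) (hper : traj F x y T = traj F x y 0)
    (hmin : ∀ k, 0 < k → k < T → traj F x y k ≠ traj F x y 0)
    {j k : ℕ} (heq : tc F x y j = tc F x y k) : j % T = k % T := by
  have h : tc F x y (j % T) = tc F x y (k % T) := by
    rw [← tc_mod hper hT0, ← tc_mod hper hT0]; exact heq
  rcases lt_trichotomy (j % T) (k % T) with hlt | he | hlt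
  · exact absurd h (fun hh => c_inj hdeg hxy hT0 hper hmin hlt (Nat.mod_lt _ hT0) hh)
  · exact he
  · exact absurd h (fun hh => c_inj hdeg hxy hT0 hper hmin hlt (Nat.mod_lt _ hT0) hh.symm)

end Period2

noncomputable def cwalk (F : SimpleGraph W) (c : ℕ → W) (h : ∀ k, F.Adj (c k) (c (k + 1))) :
    (m : ℕ) → F.Walk (c 0) (c m)
  | 0 => SimpleGraph.Walk.nil
  | (m + 1) => (cwalk F c h m).concat (h m)

theorem cwalk_length (c : ℕ → W) (h : ∀ k, F.Adj (c k) (c (k + 1))) (m : ℕ) :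
    (cwalk F c h m).length = m := by
  induction m with
  | zero => rfl
  | succ m ih => rw [cwalk, SimpleGraph.Walk.length_concat, ih]

theorem cwalk_support (c : ℕ → W) (h : ∀ k, F.Adj (c k) (c (k + 1))) (m : ℕ) :
    (cwalk F c h m).support = (List.range (m + 1)).map c := by
  induction m with
  | zero => rfl
  | succ m ih =>
    rw [cwalk, SimpleGraph.Walk.support_concat, ih, List.range_succ (n := m + 1),
      List.map_append]
    rfl

theorem cwalk_edges (c : ℕ → W) (h : ∀ k, F.Adj (c k) (c (k + 1))) (m : ℕ) :
    (cwalk F c h m).edges = (List.range m).map (fun k => s(c k, c (k + 1))) := by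
  induction m with
  | zero => rfl
  | succ m ih =>
    rw [cwalk, SimpleGraph.Walk.edges_concat, ih, List.range_succ,
      List.map_append, List.concat_eq_append]
    simp

section Cyc

variable {x y : W} {T : ℕ}

theorem cycle_T (hdeg : ∀ v : W, F.degree v = 2) (hxy : F.Adj x y)
    (hT0 : 0 < T) (hper : traj F x y T = traj F x y 0)
    (hmin : ∀ k, 0 < k → k < T → traj F x y k ≠ traj F x y 0) :
    ∃ w : F.Walk x x, w.IsCycle ∧ w.length = T := by
  have hT3 : 3 ≤ T := T_ge_three hdeg hxy hT0 hper
  set c : ℕ → W := tc F x y with hcdef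
  have hc0 : c 0 = x := rfl
  have hcT : c T = x := (congrArg Prod.fst hper).trans rfl
  have hmd : ∀ {j k : ℕ}, c j = c k → j % T = k % T :=
    fun h => c_mod hdeg hxy hT0 hper hmin h
  let w0 := cwalk F c (adjc hdeg hxy) T
  refine ⟨w0.copy hc0 hcT, ⟨⟨⟨?_⟩, ?_⟩, ?_⟩, ?_⟩
  · -- edges nodup
    rw [SimpleGraph.Walk.edges_copy, cwalk_edges]
    refine List.Nodup.map_on ?_ List.nodup_range
    intro j hj k hk he
    rw [List.mem_range] at hj hk
    rw [Sym2.eq_iff] at he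
    rcases he with ⟨h1, _⟩ | ⟨h1, h2⟩
    · have := hmd h1
      rwa [Nat.mod_eq_of_lt hj, Nat.mod_eq_of_lt hk] at this
    · -- c j = c (k+1), c (j+1) = c k
      exfalso
      have e1 := hmd h1
      have e2 := hmd h2
      rw [Nat.mod_eq_of_lt hj] at e1
      rw [Nat.mod_eq_of_lt hk] at e2
      rcases Nat.lt_or_ge (k + 1) T with hk1 | hk1
      · rw [Nat.mod_eq_of_lt hk1] at e1
        subst e1
        rcases Nat.lt_or_ge (k + 1 + 1) T with hk2 | hk2
        · rw [Nat.mod_eq_of_lt hk2] at e2; omega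
        · have : k + 1 + 1 = T := by omega
          rw [this, Nat.mod_self] at e2; omega
      · have : k + 1 = T := by omega
        rw [this, Nat.mod_self] at e1
        subst e1
        rw [Nat.mod_eq_of_lt (by omega : 0 + 1 < T)] at e2
        omega
  · -- ne nil
    intro hnil
    have := congrArg SimpleGraph.Walk.length hnil
    rw [SimpleGraph.Walk.length_copy, cwalk_length] at this
    simp at this
    omega
  · -- support tail nodup
    rw [SimpleGraph.Walk.support_copy, cwalk_support, List.range_succ_eq_map,
      List.map_cons, List.map_map]
    show List.Nodup ((List.range T).map (c ∘ Nat.succ))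
    refine List.Nodup.map_on ?_ List.nodup_range
    intro j hj k hk he
    rw [List.mem_range] at hj hk
    have := hmd (show c (j + 1) = c (k + 1) from he)
    rcases Nat.lt_or_ge (j + 1) T with h1 | h1 <;>
      rcases Nat.lt_or_ge (k + 1) T with h2 | h2
    · rw [Nat.mod_eq_of_lt h1, Nat.mod_eq_of_lt h2] at this; omega
    · have hk1 : k + 1 = T := by omega
      rw [Nat.mod_eq_of_lt h1, hk1, Nat.mod_self] at this; omega
    · have hj1 : j + 1 = T := by omega
      rw [hj1, Nat.mod_self, Nat.mod_eq_of_lt h2] at this; omega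
    · omega
  · rw [SimpleGraph.Walk.length_copy, cwalk_length]

theorem cover (hdeg : ∀ v : W, F.degree v = 2) (hxy : F.Adj x y)
    (hT0 : 0 < T) (hper : traj F x y T = traj F x y 0) :
    ∀ v, F.Reachable x v → ∃ k, v = tc F x y k := by
  have H : ∀ (a b : W) (w : F.Walk a b), (∃ k, a = tc F x y k) → ∃ m, b = tc F x y m := by
    intro a b w
    induction w with
    | nil => exact id
    | @cons u u' v h pw ih =>
      rintro ⟨k, rfl⟩
      obtain ⟨K, hK⟩ : ∃ K, k + T = K + 1 := ⟨k + T - 1, by omega⟩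
      have hadj : F.Adj (tc F x y (K + 1)) u' := by
        rw [← hK, tc_add_period hper]; exact h
      rcases nbr hdeg hxy K hadj with h1 | h1
      · exact ih ⟨K, h1⟩
      · exact ih ⟨K + 2, h1⟩
  intro v hr
  obtain ⟨wv⟩ := hr
  exact H x v wv ⟨0, rfl⟩

end Cyc


section Main

variable {n : ℕ} {p q d : Fin n → W} {G : SimpleGraph W}

theorem pq_ne (hbij : Function.Bijective (Sum.elim p (Sum.elim q d))) (i j : Fin n) :
    p i ≠ q j := by
  intro h
  have := hbij.1 (a₁ := Sum.inl i) (a₂ := Sum.inr (Sum.inl j)) (by simpa using h)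
  simp at this

theorem pd_ne (hbij : Function.Bijective (Sum.elim p (Sum.elim q d))) (i j : Fin n) :
    p i ≠ d j := by
  intro h
  have := hbij.1 (a₁ := Sum.inl i) (a₂ := Sum.inr (Sum.inr j)) (by simpa using h)
  simp at this

theorem qd_ne (hbij : Function.Bijective (Sum.elim p (Sum.elim q d))) (i j : Fin n) :
    q i ≠ d j := by
  intro h
  have := hbij.1 (a₁ := Sum.inr (Sum.inl i)) (a₂ := Sum.inr (Sum.inr j)) (by simpa using h)
  simp at this

theorem p_injective (hbij : Function.Bijective (Sum.elim p (Sum.elim q d))) {i j : Fin n}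
    (h : p i = p j) : i = j := by
  have := hbij.1 (a₁ := Sum.inl i) (a₂ := Sum.inl j) (by simpa using h)
  simpa using this

theorem q_injective (hbij : Function.Bijective (Sum.elim p (Sum.elim q d))) {i j : Fin n}
    (h : q i = q j) : i = j := by
  have := hbij.1 (a₁ := Sum.inr (Sum.inl i)) (a₂ := Sum.inr (Sum.inl j)) (by simpa using h)
  simpa using this

theorem vert_cases (hbij : Function.Bijective (Sum.elim p (Sum.elim q d))) (v : W) :
    (∃ i, v = p i) ∨ (∃ i, v = q i) ∨ (∃ i, v = d i) := by
  obtain ⟨s, hs⟩ := hbij.2 v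
  rcases s with i | s
  · exact Or.inl ⟨i, hs.symm⟩
  · rcases s with i | i
    · exact Or.inr (Or.inl ⟨i, hs.symm⟩)
    · exact Or.inr (Or.inr ⟨i, hs.symm⟩)

variable {F : SimpleGraph W}

theorem dummies (hbij : Function.Bijective (Sum.elim p (Sum.elim q d)))
    (hdummy : ∀ i x, G.Adj (d i) x ↔ (x = p i ∨ x = q i))
    (hFsub : F ≤ G) (hdeg : ∀ v : W, F.degree v = 2) (i : Fin n) :
    F.Adj (d i) (p i) ∧ F.Adj (d i) (q i) := by
  have hsub : F.neighborFinset (d i) ⊆ {p i, q i} := by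
    intro z hz
    rw [SimpleGraph.mem_neighborFinset] at hz
    have := (hdummy i z).1 (hFsub hz)
    simpa using this
  have hcard : ({p i, q i} : Finset W).card = 2 := by
    rw [Finset.card_insert_of_notMem (by simpa using pq_ne hbij i i), Finset.card_singleton]
  have heq : F.neighborFinset (d i) = {p i, q i} := by
    apply Finset.eq_of_subset_of_card_le hsub
    rw [SimpleGraph.card_neighborFinset_eq_degree, hdeg, hcard]
  constructor
  · rw [← SimpleGraph.mem_neighborFinset, heq]; simp
  · rw [← SimpleGraph.mem_neighborFinset, heq]; simp

/-- a dummy vertex adjacent (in F) to `p i` must be `d i` -/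
theorem dummy_nbr_p (hbij : Function.Bijective (Sum.elim p (Sum.elim q d)))
    (hdummy : ∀ i x, G.Adj (d i) x ↔ (x = p i ∨ x = q i))
    (hFsub : F ≤ G) {i j : Fin n} (h : F.Adj (p i) (d j)) : j = i := by
  have := (hdummy j (p i)).1 (hFsub h.symm)
  rcases this with h1 | h1
  · exact p_injective hbij h1.symm
  · exact absurd h1.symm (pq_ne hbij i j).symm.elim

theorem dummy_nbr_q (hbij : Function.Bijective (Sum.elim p (Sum.elim q d)))
    (hdummy : ∀ i x, G.Adj (d i) x ↔ (x = p i ∨ x = q i))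
    (hFsub : F ≤ G) {i j : Fin n} (h : F.Adj (q i) (d j)) : j = i := by
  have := (hdummy j (q i)).1 (hFsub h.symm)
  rcases this with h1 | h1
  · exact absurd h1 (pq_ne hbij j i).symm
  · exact q_injective hbij h1.symm

theorem key (hbij : Function.Bijective (Sum.elim p (Sum.elim q d)))
    (hdummy : ∀ i x, G.Adj (d i) x ↔ (x = p i ∨ x = q i))
    (hFsub : F ≤ G) (hdeg : ∀ v : W, F.degree v = 2)
    (hcyc : ∀ (v : W) (c : F.Walk v v), c.IsCycle → 6 ∣ c.length) (i0 : Fin n) :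
    ∃ (T : ℕ) (c : ℕ → W),
      c 0 = d i0 ∧
      (6 ∣ T ∧ 0 < T) ∧
      (∀ k, c (k + T) = c k) ∧
      (∀ j k, c j = c k → j % T = k % T) ∧
      (∀ v, F.Reachable (d i0) v → ∃ k, v = c k) ∧
      (∀ k z, F.Adj (c (k + 1)) z → z = c k ∨ z = c (k + 2)) ∧
      (∀ m, ∃ j, c (3 * m) = d j) ∧
      (∀ m, ((∃ i, c (3 * m + 1) = p i) ∨ (∃ i, c (3 * m + 1) = q i)) ∧
            ((∃ i, c (3 * m + 2) = p i) ∨ (∃ i, c (3 * m + 2) = q i))) := by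
  have hxy : F.Adj (d i0) (p i0) := (dummies hbij hdummy hFsub hdeg i0).1
  set x := d i0
  set y := p i0
  have hex : ∃ N, 0 < N ∧ traj F x y N = traj F x y 0 := exists_period hdeg hxy
  set T := Nat.find hex with hTdef
  obtain ⟨hT0, hper⟩ := Nat.find_spec hex
  have hmin : ∀ k, 0 < k → k < T → traj F x y k ≠ traj F x y 0 :=
    fun k hk0 hkT hkeq => Nat.find_min hex hkT ⟨hk0, hkeq⟩
  obtain ⟨w, hwc, hwl⟩ := cycle_T hdeg hxy hT0 hper hmin
  have h6T : 6 ∣ T := by rw [hTdef, ← hwl]; exact hcyc x w hwc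
  set c : ℕ → W := tc F x y with hcdef
  have hd0 : c 0 = d i0 := rfl
  have step3 : ∀ m j, c m = d j →
      (((∃ i, c (m + 1) = p i) ∨ (∃ i, c (m + 1) = q i)) ∧
       ((∃ i, c (m + 2) = p i) ∨ (∃ i, c (m + 2) = q i)) ∧ (∃ j', c (m + 3) = d j')) := by
    intro m j hm
    have had1 : F.Adj (d j) (c (m + 1)) := hm ▸ adjc hdeg hxy m
    have h1 : c (m + 1) = p j ∨ c (m + 1) = q j := by
      have := (hdummy j (c (m + 1))).1 (hFsub had1)
      exact this
    have hr1 : (∃ i, c (m + 1) = p i) ∨ (∃ i, c (m + 1) = q i) := by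
      rcases h1 with h | h
      · exact Or.inl ⟨j, h⟩
      · exact Or.inr ⟨j, h⟩
    have had2 : F.Adj (c (m + 1)) (c (m + 2)) := adjc hdeg hxy (m + 1)
    have hne2 : c (m + 2) ≠ d j := hm ▸ c_ne hdeg hxy m
    have hr2 : (∃ i, c (m + 2) = p i) ∨ (∃ i, c (m + 2) = q i) := by
      rcases vert_cases hbij (c (m + 2)) with h | h | ⟨b, hb⟩
      · exact Or.inl h
      · exact Or.inr h
      · exfalso
        rcases h1 with h | h
        · have : b = j := dummy_nbr_p hbij hdummy hFsub (by rw [← h, ← hb]; exact had2)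
          exact hne2 (this ▸ hb)
        · have : b = j := dummy_nbr_q hbij hdummy hFsub (by rw [← h, ← hb]; exact had2)
          exact hne2 (this ▸ hb)
    refine ⟨hr1, hr2, ?_⟩
    -- c (m+3) is the dummy of the real vertex c (m+2)
    have had3 : F.Adj (c (m + 2)) (c (m + 3)) := adjc hdeg hxy (m + 2)
    have hne3 : c (m + 3) ≠ c (m + 1) := c_ne hdeg hxy (m + 1)
    rcases hr2 with ⟨b, hb⟩ | ⟨b, hb⟩
    · refine ⟨b, ?_⟩
      have hadb : F.Adj (c (m + 2)) (d b) := by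
        rw [hb]; exact (dummies hbij hdummy hFsub hdeg b).1.symm
      have hadprev : F.Adj (c (m + 2)) (c (m + 1)) := had2.symm
      have hnedb : d b ≠ c (m + 1) := by
        rcases h1 with h | h
        · rw [h]; exact (pd_ne hbij j b).symm
        · rw [h]; exact (qd_ne hbij j b).symm
      rcases nbhd hdeg hadb hadprev hnedb had3 with h | h
      · exact h
      · exact absurd h hne3
    · refine ⟨b, ?_⟩
      have hadb : F.Adj (c (m + 2)) (d b) := by
        rw [hb]; exact (dummies hbij hdummy hFsub hdeg b).2.symm
      have hadprev : F.Adj (c (m + 2)) (c (m + 1)) := had2.symm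
      have hnedb : d b ≠ c (m + 1) := by
        rcases h1 with h | h
        · rw [h]; exact (pd_ne hbij j b).symm
        · rw [h]; exact (qd_ne hbij j b).symm
      rcases nbhd hdeg hadb hadprev hnedb had3 with h | h
      · exact h
      · exact absurd h hne3
  have hdum3 : ∀ m, ∃ j, c (3 * m) = d j := by
    intro m
    induction m with
    | zero => exact ⟨i0, hd0⟩
    | succ m ih =>
      obtain ⟨j, hj⟩ := ih
      obtain ⟨_, _, j', hj'⟩ := step3 (3 * m) j hj
      exact ⟨j', by rw [show 3 * (m + 1) = 3 * m + 3 by ring]; exact hj'⟩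
  refine ⟨T, c, hd0, ⟨h6T, hT0⟩, fun k => tc_add_period hper k,
    fun j k h => c_mod hdeg hxy hT0 hper hmin h,
    cover hdeg hxy hT0 hper, fun k z hz => nbr hdeg hxy k hz, hdum3, ?_⟩
  intro m
  obtain ⟨j, hj⟩ := hdum3 m
  obtain ⟨h1, h2, _⟩ := step3 (3 * m) j hj
  exact ⟨h1, h2⟩

end Main

end Stmt19Aux


open scoped Classical

theorem stmt_19 {W : Type*} [Fintype W] {n : ℕ} (hn : 0 < n) (heven : Even n)
    (p q d : Fin n → W)
    (hbij : Function.Bijective (Sum.elim p (Sum.elim q d)))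
    (G : SimpleGraph W)
    (hdummy : ∀ i x, G.Adj (d i) x ↔ (x = p i ∨ x = q i))
    (F : SimpleGraph W) (hFsub : F ≤ G)
    (hdeg : ∀ v : W, F.degree v = 2)
    (hcyc : ∀ (v : W) (c : F.Walk v v), c.IsCycle → 6 ∣ c.length) :
    (∀ i, F.Adj (d i) (p i) ∧ F.Adj (d i) (q i)) ∧
    (∀ v ∈ Set.range p ∪ Set.range q,
      ∃! u, u ∈ Set.range p ∪ Set.range q ∧ F.Adj v u) ∧
    (∃ B : Set W, (∀ i, (p i ∈ B ↔ q i ∉ B)) ∧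
      ∀ u v, u ∈ Set.range p ∪ Set.range q → v ∈ Set.range p ∪ Set.range q →
        F.Adj u v → (u ∈ B ↔ v ∈ B)) := by
  classical
  have hpq := Stmt19Aux.pq_ne hbij
  have hpd := Stmt19Aux.pd_ne hbij
  have hqd := Stmt19Aux.qd_ne hbij
  have hdum := fun i => Stmt19Aux.dummies hbij hdummy hFsub hdeg i
  refine ⟨hdum, ?_, ?_⟩
  · -- part 2 : perfect matching on real vertices
    intro v hv
    rcases hv with ⟨i, rfl⟩ | ⟨i, rfl⟩
    · -- v = p i
      set u := Stmt19Aux.other F (d i) (p i) with hudef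
      obtain ⟨hu1, hu2⟩ := Stmt19Aux.other_adj hdeg (hdum i).1
      have hureal : u ∈ Set.range p ∪ Set.range q := by
        rcases Stmt19Aux.vert_cases hbij u with ⟨a, ha⟩ | ⟨a, ha⟩ | ⟨a, ha⟩
        · exact Or.inl ⟨a, ha.symm⟩
        · exact Or.inr ⟨a, ha.symm⟩
        · exfalso
          have hai : a = i := Stmt19Aux.dummy_nbr_p hbij hdummy hFsub (ha ▸ hu1)
          exact hu2 (by rw [← hudef, ha, hai])
      refine ⟨u, ⟨hureal, hu1⟩, ?_⟩
      rintro u' ⟨hu'r, hu'a⟩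
      have hne : u' ≠ d i := by
        rcases hu'r with ⟨a, ha⟩ | ⟨a, ha⟩
        · rw [← ha]; exact hpd a i
        · rw [← ha]; exact hqd a i
      exact Stmt19Aux.other_eq hdeg (hdum i).1 hu'a hne
    · -- v = q i
      set u := Stmt19Aux.other F (d i) (q i) with hudef
      obtain ⟨hu1, hu2⟩ := Stmt19Aux.other_adj hdeg (hdum i).2
      have hureal : u ∈ Set.range p ∪ Set.range q := by
        rcases Stmt19Aux.vert_cases hbij u with ⟨a, ha⟩ | ⟨a, ha⟩ | ⟨a, ha⟩
        · exact Or.inl ⟨a, ha.symm⟩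
        · exact Or.inr ⟨a, ha.symm⟩
        · exfalso
          have hai : a = i := Stmt19Aux.dummy_nbr_q hbij hdummy hFsub (ha ▸ hu1)
          exact hu2 (by rw [← hudef, ha, hai])
      refine ⟨u, ⟨hureal, hu1⟩, ?_⟩
      rintro u' ⟨hu'r, hu'a⟩
      have hne : u' ≠ d i := by
        rcases hu'r with ⟨a, ha⟩ | ⟨a, ha⟩
        · rw [← ha]; exact hpd a i
        · rw [← ha]; exact hqd a i
      exact Stmt19Aux.other_eq hdeg (hdum i).2 hu'a hne
  · -- part 3 : the 2-coloring
    choose T c hc0 h6T hper hmod hcover hnbr hdum3 hreal3 using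
      fun i0 => Stmt19Aux.key hbij hdummy hFsub hdeg hcyc i0
    have hpickex : ∀ C : F.ConnectedComponent, ∃ i, F.connectedComponentMk (d i) = C := by
      intro C
      obtain ⟨v, rfl⟩ := C.exists_rep
      rcases Stmt19Aux.vert_cases hbij v with ⟨i, rfl⟩ | ⟨i, rfl⟩ | ⟨i, rfl⟩
      · exact ⟨i, SimpleGraph.ConnectedComponent.sound (hdum i).1.reachable⟩
      · exact ⟨i, SimpleGraph.ConnectedComponent.sound (hdum i).2.reachable⟩
      · exact ⟨i, rfl⟩
    choose pick hpick using hpickex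
    set idx : W → Fin n := fun v => pick (F.connectedComponentMk v) with hidxdef
    set B : Set W := {v | ∃ k, (k % 6 = 1 ∨ k % 6 = 2) ∧ v = c (idx v) k} with hBdef
    have hreachbase : ∀ v : W, F.Reachable (d (idx v)) v := by
      intro v
      exact SimpleGraph.ConnectedComponent.exact (hpick (F.connectedComponentMk v))
    have hBiff : ∀ (v : W) (k : ℕ), v = c (idx v) k →
        (v ∈ B ↔ (k % 6 = 1 ∨ k % 6 = 2)) := by
      intro v k hk
      simp only [hBdef, Set.mem_setOf_eq]
      constructor
      · rintro ⟨k', hk', hv'⟩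
        have he : c (idx v) k = c (idx v) k' := by rw [← hk, ← hv']
        have hmm := hmod (idx v) k k' he
        have hdvd := (h6T (idx v)).1
        have h1 : k % T (idx v) % 6 = k % 6 := Nat.mod_mod_of_dvd k hdvd
        have h2 : k' % T (idx v) % 6 = k' % 6 := Nat.mod_mod_of_dvd k' hdvd
        have : k % 6 = k' % 6 := by rw [← h1, ← h2, hmm]
        omega
      · intro hcl
        exact ⟨k, hcl, hk⟩
    have hidx_eq : ∀ u v : W, F.Reachable u v → idx u = idx v := by
      intro u v h
      simp only [hidxdef]
      rw [SimpleGraph.ConnectedComponent.sound h]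
    have hdummy_at : ∀ (i0 : Fin n) k, k % 3 = 0 → ∃ j, c i0 k = d j := by
      intro i0 k h
      obtain ⟨j, hj⟩ := hdum3 i0 (k / 3)
      exact ⟨j, by rw [show k = 3 * (k / 3) by omega]; exact hj⟩
    have hreal_at : ∀ (i0 : Fin n) k, k % 3 ≠ 0 →
        (∃ a, c i0 k = p a) ∨ (∃ a, c i0 k = q a) := by
      intro i0 k h
      rcases Nat.lt_or_ge (k % 3) 2 with h1 | h1
      · rw [show k = 3 * (k / 3) + 1 by omega]
        exact (hreal3 i0 (k / 3)).1
      · rw [show k = 3 * (k / 3) + 2 by omega]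
        exact (hreal3 i0 (k / 3)).2
    have hreal_pos : ∀ (i0 : Fin n) k,
        ((∃ a, c i0 k = p a) ∨ (∃ a, c i0 k = q a)) → k % 3 ≠ 0 := by
      intro i0 k h h0
      obtain ⟨j, hj⟩ := hdummy_at i0 k h0
      rcases h with ⟨a, ha⟩ | ⟨a, ha⟩
      · exact hpd a j (by rw [← ha, hj])
      · exact hqd a j (by rw [← ha, hj])
    have hcover2 : ∀ v : W, ∃ k, 2 ≤ k ∧ v = c (idx v) k := by
      intro v
      obtain ⟨k, hk⟩ := hcover (idx v) v (hreachbase v)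
      have hT1 := (h6T (idx v)).2
      refine ⟨k + T (idx v) + T (idx v), by omega, ?_⟩
      rw [hper (idx v) (k + T (idx v)), hper (idx v) k]
      exact hk
    refine ⟨B, ?_, ?_⟩
    · -- pairs get opposite colors
      intro i
      obtain ⟨a, ha2, hpa⟩ := hcover2 (p i)
      have hqidx : idx (q i) = idx (p i) :=
        hidx_eq (q i) (p i) (((hdum i).2.symm.reachable).trans (hdum i).1.reachable)
      have ha3 : a % 3 ≠ 0 := hreal_pos (idx (p i)) a (Or.inl ⟨i, hpa.symm⟩)
      have hdi_adj : F.Adj (c (idx (p i)) a) (d i) := by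
        rw [← hpa]; exact (hdum i).1.symm
      have hPB := hBiff (p i) a hpa
      rcases (show a % 3 = 1 ∨ a % 3 = 2 by omega) with h3 | h3
      · -- d i = c (a-1), q i = c (a-2)
        have h1 : d i = c (idx (p i)) (a - 1) ∨ d i = c (idx (p i)) (a + 1) := by
          have := hnbr (idx (p i)) (a - 1) (d i)
            (by rw [show a - 1 + 1 = a by omega]; exact hdi_adj)
          rwa [show a - 1 + 2 = a + 1 by omega] at this
        have h1' : d i = c (idx (p i)) (a - 1) := by
          rcases h1 with h | h
          · exact h
          · exfalso
            rcases hreal_at (idx (p i)) (a + 1) (by omega) with ⟨b, hb⟩ | ⟨b, hb⟩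
            · exact hpd b i (by rw [← hb, ← h])
            · exact hqd b i (by rw [← hb, ← h])
        have hq_adj : F.Adj (c (idx (p i)) (a - 2 + 1)) (q i) := by
          rw [show a - 2 + 1 = a - 1 by omega, ← h1']
          exact (hdum i).2
        rcases hnbr (idx (p i)) (a - 2) (q i) hq_adj with h2 | h2
        · have hQB := hBiff (q i) (a - 2) (by rw [hqidx]; exact h2)
          rw [hPB, hQB]
          omega
        · exfalso
          rw [show a - 2 + 2 = a by omega] at h2
          exact hpq i i (hpa.trans h2.symm)
      · -- d i = c (a+1), q i = c (a+2)
        have h1 : d i = c (idx (p i)) (a - 1) ∨ d i = c (idx (p i)) (a + 1) := by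
          have := hnbr (idx (p i)) (a - 1) (d i)
            (by rw [show a - 1 + 1 = a by omega]; exact hdi_adj)
          rwa [show a - 1 + 2 = a + 1 by omega] at this
        have h1' : d i = c (idx (p i)) (a + 1) := by
          rcases h1 with h | h
          · exfalso
            rcases hreal_at (idx (p i)) (a - 1) (by omega) with ⟨b, hb⟩ | ⟨b, hb⟩
            · exact hpd b i (by rw [← hb, ← h])
            · exact hqd b i (by rw [← hb, ← h])
          · exact h
        have hq_adj : F.Adj (c (idx (p i)) (a + 1)) (q i) := by
          rw [← h1']
          exact (hdum i).2
        rcases hnbr (idx (p i)) a (q i) hq_adj with h2 | h2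
        · exfalso
          exact hpq i i (hpa.trans h2.symm)
        · have hQB := hBiff (q i) (a + 2) (by rw [hqidx]; exact h2)
          rw [hPB, hQB]
          omega
    · -- real edges are monochromatic
      intro u v hu hv huv
      obtain ⟨a, ha2, hua⟩ := hcover2 u
      have hvidx : idx v = idx u := hidx_eq v u huv.symm.reachable
      have ha3 : a % 3 ≠ 0 := by
        apply hreal_pos (idx u) a
        rcases hu with ⟨b, hb⟩ | ⟨b, hb⟩
        · exact Or.inl ⟨b, by rw [← hua, ← hb]⟩
        · exact Or.inr ⟨b, by rw [← hua, ← hb]⟩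
      have hv3 : F.Adj (c (idx u) (a - 1 + 1)) v := by
        rw [show a - 1 + 1 = a by omega, ← hua]; exact huv
      have hUB := hBiff u a hua
      rcases hnbr (idx u) (a - 1) v hv3 with h2 | h2
      · have hb3 : (a - 1) % 3 ≠ 0 := by
          apply hreal_pos (idx u) (a - 1)
          rcases hv with ⟨b, hb⟩ | ⟨b, hb⟩
          · exact Or.inl ⟨b, by rw [← h2, ← hb]⟩
          · exact Or.inr ⟨b, by rw [← h2, ← hb]⟩
        have hVB := hBiff v (a - 1) (by rw [hvidx]; exact h2)
        rw [hUB, hVB]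
        omega
      · rw [show a - 1 + 2 = a + 1 by omega] at h2
        have hb3 : (a + 1) % 3 ≠ 0 := by
          apply hreal_pos (idx u) (a + 1)
          rcases hv with ⟨b, hb⟩ | ⟨b, hb⟩
          · exact Or.inl ⟨b, by rw [← h2, ← hb]⟩
          · exact Or.inr ⟨b, by rw [← h2, ← hb]⟩
        have hVB := hBiff v (a + 1) (by rw [hvidx]; exact h2)
        rw [hUB, hVB]
        omega
end
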